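/- Let B = Kⁿ with canonical idempotent basis {e_1,…,e_n}, and let χ : A⊗Kⁿ → Kⁿ⊗A be given by χ(a⊗e_i) = Σ_j e_j ⊗ γ_i^j(a) for linear maps γ_i^j : A → A. Then χ is a twisting map if and only if: (1) γ_i^p ∘ γ_j^p = δ_{ij} γ_i^p for all i,j,p; (2) Σ_{j=1}^n γ_j^i = id_A for each i; (3) γ_j^i(ab) = Σ_p γ_p^i(a) γ_j^p(b) for all a,b and all i,j; (4) γ_j^i(1) = δ_{ij}·1. -/
import Mathlib

set_option maxHeartbeats 1000000
set_option synthInstance.maxHeartbeats 400000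

open TensorProduct LinearMap

variable (K : Type*)

def IsTwistingMap {A B : Type*} [Field K] [Ring A] [Ring B] [Algebra K A] [Algebra K B]
    (χ : A ⊗[K] B →ₗ[K] B ⊗[K] A) : Prop :=
  (∀ b : B, χ ((1 : A) ⊗ₜ[K] b) = b ⊗ₜ[K] (1 : A)) ∧
  (∀ a : A, χ (a ⊗ₜ[K] (1 : B)) = (1 : B) ⊗ₜ[K] a) ∧
  (∀ (a a' : A) (b : B),
    χ ((a * a') ⊗ₜ[K] b) =
      lTensor B (mul' K A)
        (TensorProduct.assoc K B A A
          (rTensor A χ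
            ((TensorProduct.assoc K A B A).symm (a ⊗ₜ[K] χ (a' ⊗ₜ[K] b)))))) ∧
  (∀ (a : A) (b b' : B),
    χ (a ⊗ₜ[K] (b * b')) =
      rTensor A (mul' K B)
        ((TensorProduct.assoc K B B A).symm
          (lTensor B χ
            (TensorProduct.assoc K B A B (χ (a ⊗ₜ[K] b) ⊗ₜ[K] b')))))

noncomputable def twistMul {A B : Type*} [Field K] [Ring A] [Ring B] [Algebra K A] [Algebra K B]
    (χ : A ⊗[K] B →ₗ[K] B ⊗[K] A) :
    (B ⊗[K] A) ⊗[K] (B ⊗[K] A) →ₗ[K] B ⊗[K] A :=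
  TensorProduct.map (mul' K B) (mul' K A)
    ∘ₗ (TensorProduct.assoc K B B (A ⊗[K] A)).symm.toLinearMap
    ∘ₗ lTensor B (TensorProduct.assoc K B A A).toLinearMap
    ∘ₗ lTensor B (rTensor A χ)
    ∘ₗ lTensor B (TensorProduct.assoc K A B A).symm.toLinearMap
    ∘ₗ (TensorProduct.assoc K B A (B ⊗[K] A)).toLinearMap

section Aux

variable {K} [Field K] {A : Type*} [Ring A] [Algebra K A] {n : ℕ}

private noncomputable def twKnPr (k : Fin n) : (Fin n → K) ⊗[K] A →ₗ[K] A :=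
  (TensorProduct.lid K A).toLinearMap ∘ₗ rTensor A (LinearMap.proj k)

private lemma twKnPr_tmul (k : Fin n) (v : Fin n → K) (x : A) :
    twKnPr k (v ⊗ₜ[K] x) = v k • x := by
  simp [twKnPr]

private lemma twKnPr_single (k j : Fin n) (x : A) :
    twKnPr k ((Pi.single j 1 : Fin n → K) ⊗ₜ[K] x) = if k = j then x else 0 := by
  rw [twKnPr_tmul, Pi.single_apply]; split_ifs <;> simp

private lemma twKn_extract {x y : Fin n → A}
    (h : ∑ j : Fin n, (Pi.single j (1:K) : Fin n → K) ⊗ₜ[K] x j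
       = ∑ j : Fin n, (Pi.single j (1:K) : Fin n → K) ⊗ₜ[K] y j) (k : Fin n) : x k = y k := by
  have := congrArg (twKnPr k) h
  simpa [twKnPr_single, Finset.sum_ite_eq] using this

private lemma twKn_single_mul (i j : Fin n) :
    (Pi.single i 1 : Fin n → K) * Pi.single j 1 = if i = j then Pi.single i 1 else 0 := by
  funext k; simp [Pi.single_apply, ite_and]
  split_ifs <;> simp_all [Pi.single_apply]

private lemma twKn_sum_single : (1 : Fin n → K) = ∑ i, (Pi.single i 1 : Fin n → K) := by
  funext k; simp [Pi.single_apply]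

private lemma twKn_dec (b : Fin n → K) : b = ∑ i, b i • (Pi.single i 1 : Fin n → K) := by
  funext k; simp [Pi.single_apply, Finset.sum_apply]

private lemma twKn_rhs3 (χ : A ⊗[K] (Fin n → K) →ₗ[K] (Fin n → K) ⊗[K] A)
    (γ : Fin n → Fin n → (A →ₗ[K] A))
    (hχ : ∀ (a : A) (i : Fin n),
      χ (a ⊗ₜ[K] Pi.single i (1 : K)) =
        ∑ j : Fin n, (Pi.single j (1 : K) : Fin n → K) ⊗ₜ[K] γ i j a)
    (a a' : A) (i : Fin n) :
    lTensor (Fin n → K) (mul' K A)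
        (TensorProduct.assoc K (Fin n → K) A A
          (rTensor A χ
            ((TensorProduct.assoc K A (Fin n → K) A).symm
              (a ⊗ₜ[K] χ (a' ⊗ₜ[K] Pi.single i 1)))))
      = ∑ p : Fin n, (Pi.single p (1:K) : Fin n → K) ⊗ₜ[K] (∑ j : Fin n, γ j p a * γ i j a') := by
  rw [hχ a' i]
  simp only [tmul_sum, map_sum, assoc_symm_tmul, rTensor_tmul, hχ a, sum_tmul, assoc_tmul,
    lTensor_tmul, mul'_apply]
  rw [Finset.sum_comm]

private lemma twKn_rhs4 (χ : A ⊗[K] (Fin n → K) →ₗ[K] (Fin n → K) ⊗[K] A)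
    (γ : Fin n → Fin n → (A →ₗ[K] A))
    (hχ : ∀ (a : A) (i : Fin n),
      χ (a ⊗ₜ[K] Pi.single i (1 : K)) =
        ∑ j : Fin n, (Pi.single j (1 : K) : Fin n → K) ⊗ₜ[K] γ i j a)
    (a : A) (i j : Fin n) :
    rTensor A (mul' K (Fin n → K))
        ((TensorProduct.assoc K (Fin n → K) (Fin n → K) A).symm
          (lTensor (Fin n → K) χ
            (TensorProduct.assoc K (Fin n → K) A (Fin n → K)
              (χ (a ⊗ₜ[K] Pi.single i 1) ⊗ₜ[K] (Pi.single j 1 : Fin n → K)))))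
      = ∑ p : Fin n, (Pi.single p (1:K) : Fin n → K) ⊗ₜ[K] γ j p (γ i p a) := by
  rw [hχ a i]
  simp only [sum_tmul, map_sum, assoc_tmul, lTensor_tmul, hχ, tmul_sum, assoc_symm_tmul,
    rTensor_tmul, mul'_apply, twKn_single_mul, ite_tmul]
  refine Finset.sum_congr rfl fun p _ => ?_
  simp [Finset.sum_ite_eq]

end Aux

theorem twisting_with_Kn {A : Type*} [Field K] [Ring A] [Algebra K A] {n : ℕ}
    (χ : A ⊗[K] (Fin n → K) →ₗ[K] (Fin n → K) ⊗[K] A)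
    (γ : Fin n → Fin n → (A →ₗ[K] A))
    (hχ : ∀ (a : A) (i : Fin n),
      χ (a ⊗ₜ[K] Pi.single i (1 : K)) =
        ∑ j : Fin n, (Pi.single j (1 : K) : Fin n → K) ⊗ₜ[K] γ i j a) :
    IsTwistingMap K χ ↔
      ((∀ (i j p : Fin n) (a : A), γ i p (γ j p a) = if i = j then γ i p a else 0) ∧
       (∀ (i : Fin n) (a : A), ∑ j : Fin n, γ j i a = a) ∧
       (∀ (i j : Fin n) (a b : A), γ j i (a * b) = ∑ p : Fin n, γ p i a * γ j p b) ∧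
       (∀ i j : Fin n, γ j i (1 : A) = if i = j then 1 else 0)) := by
  constructor
  · rintro ⟨h1, h2, h3, h4⟩
    refine ⟨?_, ?_, ?_, ?_⟩
    · -- γ i p (γ j p a) = if i = j then γ i p a else 0
      intro i j p a
      have key := h4 a (Pi.single j 1) (Pi.single i 1)
      rw [twKn_rhs4 χ γ hχ, twKn_single_mul] at key
      have key2 : ∑ q : Fin n, (Pi.single q (1:K) : Fin n → K) ⊗ₜ[K]
          (if j = i then γ j q a else 0)
          = ∑ q : Fin n, (Pi.single q (1:K) : Fin n → K) ⊗ₜ[K] γ i q (γ j q a) := by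
        rw [← key]
        split_ifs with h
        · subst h; rw [hχ]
        · simp
      have := twKn_extract key2 p
      rw [← this]
      by_cases h : i = j
      · subst h; rfl
      · rw [if_neg (fun h' => h h'.symm), if_neg h]
    · -- sum
      intro i a
      have key := h2 a
      rw [twKn_sum_single (K := K) (n := n)] at key
      simp only [tmul_sum, map_sum, hχ, sum_tmul] at key
      rw [Finset.sum_comm] at key
      have key2 : ∑ j : Fin n, (Pi.single j (1:K) : Fin n → K) ⊗ₜ[K]
          (∑ q : Fin n, γ q j a)
          = ∑ j : Fin n, (Pi.single j (1:K) : Fin n → K) ⊗ₜ[K] a := by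
        simpa [tmul_sum] using key
      exact twKn_extract key2 i
    · -- multiplicativity
      intro i j a b
      have key := h3 a b (Pi.single j 1)
      rw [twKn_rhs3 χ γ hχ, hχ] at key
      exact twKn_extract key i
    · -- unit
      intro i j
      have key := h1 (Pi.single j (1:K))
      rw [hχ] at key
      have key2 : ∑ q : Fin n, (Pi.single q (1:K) : Fin n → K) ⊗ₜ[K] γ j q 1
          = ∑ q : Fin n, (Pi.single q (1:K) : Fin n → K) ⊗ₜ[K]
              (if j = q then (1:A) else 0) := by
        rw [key]
        simp [tmul_ite, Finset.sum_ite_eq]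
      have h := twKn_extract key2 i
      rw [h]
      by_cases hij : i = j
      · subst hij; rfl
      · rw [if_neg (fun h' => hij h'.symm), if_neg hij]
  · rintro ⟨hg1, hg2, hg3, hg4⟩
    -- basis-level facts
    have hb1 : ∀ i : Fin n, χ ((1:A) ⊗ₜ[K] (Pi.single i 1 : Fin n → K))
        = (Pi.single i 1 : Fin n → K) ⊗ₜ[K] (1:A) := by
      intro i
      rw [hχ]
      have : ∀ j : Fin n, γ i j (1:A) = if j = i then 1 else 0 := fun j => hg4 j i
      simp only [this, tmul_ite, Finset.sum_ite_eq', Finset.mem_univ, if_true]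
    refine ⟨?_, ?_, ?_, ?_⟩
    · -- χ(1 ⊗ b) = b ⊗ 1
      intro b
      rw [twKn_dec b]
      simp only [tmul_sum, map_sum, tmul_smul, map_smul, hb1]
      simp only [smul_tmul']
      rw [← sum_tmul]
    · -- χ(a ⊗ 1) = 1 ⊗ a
      intro a
      rw [twKn_sum_single (K := K) (n := n)]
      simp only [tmul_sum, map_sum, hχ, sum_tmul]
      rw [Finset.sum_comm]
      simp only [← tmul_sum]
      refine Finset.sum_congr rfl fun j _ => ?_
      rw [hg2 j a]
    · -- A-multiplicativity
      intro a a' b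
      rw [twKn_dec b]
      simp only [tmul_sum, tmul_smul, map_sum, map_smul]
      refine Finset.sum_congr rfl fun i _ => congrArg _ ?_
      rw [hχ, twKn_rhs3 χ γ hχ]
      refine Finset.sum_congr rfl fun p _ => ?_
      congr 1
      exact hg3 p i a a'
    · -- B-multiplicativity
      intro a b b'
      have base : ∀ i j : Fin n, χ (a ⊗ₜ[K] ((Pi.single i 1 : Fin n → K) * Pi.single j 1)) =
          rTensor A (mul' K (Fin n → K))
            ((TensorProduct.assoc K (Fin n → K) (Fin n → K) A).symm
              (lTensor (Fin n → K) χ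
                (TensorProduct.assoc K (Fin n → K) A (Fin n → K)
                  (χ (a ⊗ₜ[K] (Pi.single i 1 : Fin n → K)) ⊗ₜ[K]
                    (Pi.single j 1 : Fin n → K))))) := by
        intro i j
        rw [twKn_rhs4 χ γ hχ, twKn_single_mul]
        have : ∀ p : Fin n, γ j p (γ i p a) = if i = j then γ i p a else 0 := by
          intro p
          rw [hg1 j i p a]
          by_cases h : i = j <;> simp [h, eq_comm]
        simp only [this, tmul_ite]
        split_ifs with h
        · rw [hχ]
        · simp
      rw [twKn_dec b, twKn_dec b']
      rw [Finset.sum_mul]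
      simp only [Finset.mul_sum, smul_mul_assoc, mul_smul_comm]
      simp only [tmul_sum, tmul_smul, ← smul_tmul', map_sum, map_smul, sum_tmul,
        Finset.smul_sum, base]
      exact Finset.sum_comm
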